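/- In a DAG where Y has no descendants, T ∈ PA(Y), and all other variables are non-descendants of T and Y: in the mutilated graph obtained by deleting all edges out of T, every path from T to Y is blocked by PA(Y)\{T}; i.e., PA(Y)\{T} d-separates T and Y in G with T's outgoing edges removed. -/

import Mathlib

/-- `v` is a collider on a path segment `u - v - w`: both edges point into `v`. -/
def Collider {V : Type*} (E : V → V → Prop) (u v w : V) : Prop := E u v ∧ E w v

/-- The triple `u - v - w` blocks a path with respect to the conditioning set `S`. -/
def BlockedTriple {V : Type*} (E : V → V → Prop) (S : Set V) (u v w : V) : Prop :=
  (¬ Collider E u v w ∧ v ∈ S) ∨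
  (Collider E u v w ∧ v ∉ S ∧ ∀ d, Relation.TransGen E v d → d ∉ S)

/-- An (undirected) path in the directed graph `E` from `a` to `b`. -/
def AdjPath {V : Type*} (E : V → V → Prop) (p : List V) (a b : V) : Prop :=
  List.Chain' (fun x y => E x y ∨ E y x) p ∧ p.head? = some a ∧
    p.getLast? = some b ∧ p.Nodup ∧ 2 ≤ p.length

/-- A path is blocked by `S` if some consecutive triple on it is blocked. -/
def Blocked {V : Type*} (E : V → V → Prop) (S : Set V) (p : List V) : Prop :=
  ∃ u v w, List.IsInfix [u, v, w] p ∧ BlockedTriple E S u v w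

/-- `S` d-separates `a` and `b`: every path between them is blocked by `S`. -/
def DSep {V : Type*} (E : V → V → Prop) (S : Set V) (a b : V) : Prop :=
  ∀ p, AdjPath E p a b → Blocked E S p

/-- A directed graph is acyclic (a DAG). -/
def IsAcyclic {V : Type*} (E : V → V → Prop) : Prop := ∀ v, ¬ Relation.TransGen E v v

/-- in a DAG where `Y` has no descendants, `T ∈ PA(Y)` and all
other variables are non-descendants of `T` and `Y`, the set `PA(Y) \ {T}`
d-separates `T` and `Y` in the mutilated graph obtained by deleting all edges
going out of `T`. -/
theorem dsep_in_outgoing_mutilated_graph {V : Type*} (E : V → V → Prop)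
    (hacyc : IsAcyclic E) (T Y : V) (hTY : E T Y)
    (hnochild : ∀ c, ¬ E Y c)
    (hpre : ∀ v, v ≠ T → v ≠ Y →
      ¬ Relation.TransGen E T v ∧ ¬ Relation.TransGen E Y v) :
    DSep (fun x y => E x y ∧ x ≠ T) ({x | E x Y} \ {T}) T Y := by
  rintro p ⟨hchain, hhead, hlast, hnodup, hlen⟩
  obtain ⟨q, rfl⟩ : ∃ q : List V, p = q.reverse := ⟨p.reverse, (p.reverse_reverse).symm⟩
  rw [List.getLast?_reverse] at hlast
  rw [List.head?_reverse] at hhead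
  rw [List.length_reverse] at hlen
  match q, hlast, hhead, hlen with
  | [y, u], hlast, hhead, _ =>
    simp at hlast hhead
    obtain rfl := hlast.symm
    obtain rfl := hhead.symm
    simp [List.Chain', List.isChain_cons_cons] at hchain
    exact absurd hchain.1 (hnochild T)
  | y :: u :: w :: s, hlast, hhead, _ =>
    simp only [List.head?_cons, Option.some.injEq] at hlast
    obtain rfl := hlast.symm
    have hinfix : List.IsInfix [w, u, Y] (Y :: u :: w :: s).reverse :=
      ⟨s.reverse, [], by simp⟩
    have hch3 : List.Chain' (fun x y => (E x y ∧ x ≠ T) ∨ (E y x ∧ y ≠ T)) [w, u, Y] :=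
      hchain.infix hinfix
    simp [List.Chain', List.isChain_cons_cons] at hch3
    obtain ⟨-, huY⟩ := hch3
    have huY' : E u Y ∧ u ≠ T := by
      rcases huY with h | ⟨h, _⟩
      · exact h
      · exact absurd h (hnochild u)
    refine ⟨w, u, Y, hinfix, Or.inl ⟨?_, ?_⟩⟩
    · rintro ⟨-, hYu, -⟩
      exact hnochild u hYu
    · exact ⟨huY'.1, huY'.2⟩
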